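/- arXiv:1711.06740 — 2 statements merged into one kernel-verified Lean document; each statement's English description precedes it below -/
import Mathlib

section
/- Let V be a finite set with a symmetric neighbor relation N (edges of an undirected graph, no self-loops) such that every node has at least one neighbor, and let τ : V × V → ℝ satisfy τ(v,u) ≥ τ_min > 0 whenever u ∈ N(v). Define c_e(S) = Σ_{v ∈ S_p} max_{u ∈ S ∩ N(v)} τ(v,u) + Σ_{v ∈ S \ S_p} min_{u ∈ N(v)} τ(v,u), where S_p = {v ∈ S : S ∩ N(v) ≠ ∅}. Then c_e is strictly monotone: for all S ⊆ V and v ∉ S, c_e(S ∪ {v}) ≥ c_e(S) + τ_min > c_e(S). -/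
theorem ce_strictly_monotone {V : Type*} [Fintype V] [DecidableEq V]
    (N : V → Finset V) (hsym : ∀ v u, u ∈ N v → v ∈ N u)
    (hirr : ∀ v, v ∉ N v) (hN : ∀ v, (N v).Nonempty)
    (τ : V → V → ℝ) (τ_min : ℝ) (hτmin : 0 < τ_min)
    (hτ : ∀ v u, u ∈ N v → τ_min ≤ τ v u)
    (ce : Finset V → ℝ)
    (hce : ∀ S : Finset V, ce S = ∑ v ∈ S,
      (if h : (S ∩ N v).Nonempty then (S ∩ N v).sup' h (fun u => τ v u)
       else (N v).inf' (hN v) (fun u => τ v u)))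
    (S : Finset V) (v : V) (hv : v ∉ S) :
    ce (insert v S) ≥ ce S + τ_min ∧ ce S + τ_min > ce S := by
  have key : ce (insert v S) ≥ ce S + τ_min := by
    rw [hce, hce, Finset.sum_insert hv]
    set T := insert v S with hT
    have h1 : ∀ w ∈ S, (if h : (S ∩ N w).Nonempty then (S ∩ N w).sup' h (fun u => τ w u)
        else (N w).inf' (hN w) (fun u => τ w u)) ≤
        (if h : (T ∩ N w).Nonempty then (T ∩ N w).sup' h (fun u => τ w u)
        else (N w).inf' (hN w) (fun u => τ w u)) := by
      intro w hw
      by_cases hS : (S ∩ N w).Nonempty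
      · have hsub : S ∩ N w ⊆ T ∩ N w :=
          Finset.inter_subset_inter (Finset.subset_insert _ _) le_rfl
        have hT' : (T ∩ N w).Nonempty := hS.mono hsub
        rw [dif_pos hS, dif_pos hT']
        exact Finset.sup'_le _ _ fun u hu => Finset.le_sup' _ (hsub hu)
      · rw [dif_neg hS]
        by_cases hvN : v ∈ N w
        · have hmem : v ∈ T ∩ N w := Finset.mem_inter.2 ⟨Finset.mem_insert_self _ _, hvN⟩
          have hT' : (T ∩ N w).Nonempty := ⟨v, hmem⟩
          rw [dif_pos hT']
          calc (N w).inf' (hN w) (fun u => τ w u) ≤ τ w v := Finset.inf'_le _ hvN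
            _ ≤ _ := Finset.le_sup' _ hmem
        · have heq : T ∩ N w = S ∩ N w := Finset.insert_inter_of_notMem hvN
          rw [heq, dif_neg hS]
    have h2 : τ_min ≤ (if h : (T ∩ N v).Nonempty then (T ∩ N v).sup' h (fun u => τ v u)
        else (N v).inf' (hN v) (fun u => τ v u)) := by
      by_cases hTv : (T ∩ N v).Nonempty
      · rw [dif_pos hTv]
        obtain ⟨u, hu⟩ := hTv
        exact le_trans (hτ v u (Finset.mem_inter.1 hu).2) (Finset.le_sup' _ hu)
      · rw [dif_neg hTv]
        exact Finset.le_inf' _ _ fun u hu => hτ v u hu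
    have := Finset.sum_le_sum h1
    linarith
  exact ⟨key, by linarith⟩
end

section
/- Let G' = (V, E') be an undirected graph, 0 < τ_min < τ_max, budget B = |V|·τ_min with τ_max > B. Define payments on the complete graph on V by τ(v,u) = τ_min if {v,u} ∈ E' and τ(v,u) = τ_max otherwise, and let c_e be the extended cost function for the complete peer graph. Then a set S ⊆ V with |S| ≥ 2 satisfies c_e(S) ≤ B if and only if S is a clique in G'. -/
theorem clique_reduction {V : Type*} [Fintype V] [DecidableEq V]
    (hcard : 1 < Fintype.card V)
    (E' : V → V → Prop) [DecidableRel E']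
    (hEsym : ∀ v u, E' v u → E' u v) (hEirr : ∀ v, ¬ E' v v)
    (τ_min τ_max : ℝ) (hτmin : 0 < τ_min) (hlt : τ_min < τ_max)
    (B : ℝ) (hB : B = (Fintype.card V : ℝ) * τ_min) (hτmax : B < τ_max)
    (τ : V → V → ℝ)
    (hτ : ∀ v u, τ v u = if E' v u then τ_min else τ_max)
    (N : V → Finset V) (hNdef : ∀ v, N v = Finset.univ.erase v)
    (hN : ∀ v, (N v).Nonempty)
    (ce : Finset V → ℝ)
    (hce : ∀ S : Finset V, ce S = ∑ v ∈ S,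
      (if h : (S ∩ N v).Nonempty then (S ∩ N v).sup' h (fun u => τ v u)
       else (N v).inf' (hN v) (fun u => τ v u)))
    (S : Finset V) (hS : 2 ≤ S.card) :
    ce S ≤ B ↔ ∀ v ∈ S, ∀ u ∈ S, v ≠ u → E' v u := by
  have hSN : ∀ v, S ∩ N v = S.erase v := by
    intro v; rw [hNdef]; ext u
    simp [Finset.mem_erase, and_comm]
  have hne : ∀ v ∈ S, (S.erase v).Nonempty := by
    intro v hv
    have h1 := Finset.card_erase_of_mem hv
    exact Finset.card_pos.mp (by omega)
  have hτge : ∀ v u, τ_min ≤ τ v u := by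
    intro v u; rw [hτ]; split <;> linarith
  have hceS : ce S = ∑ v ∈ S,
      (if h : (S.erase v).Nonempty then (S.erase v).sup' h (fun u => τ v u)
       else (N v).inf' (hN v) (fun u => τ v u)) := by
    rw [hce]; apply Finset.sum_congr rfl; intro v hv; rw [hSN]
  constructor
  · intro hle v hv u hu hvu
    by_contra hne'
    -- the term at v is at least τ_max
    have hu' : u ∈ S.erase v := Finset.mem_erase.mpr ⟨fun h => hvu h.symm, hu⟩
    have hterm : τ_max ≤ (S.erase v).sup' (hne v hv) (fun u => τ v u) := by
      have := Finset.le_sup' (fun u => τ v u) hu'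
      rw [hτ, if_neg hne'] at this
      exact this
    have hpos : ∀ w ∈ S, 0 ≤ (if h : (S.erase w).Nonempty then (S.erase w).sup' h (fun u => τ w u)
       else (N w).inf' (hN w) (fun u => τ w u)) := by
      intro w hw
      rw [dif_pos (hne w hw)]
      obtain ⟨x, hx⟩ := hne w hw
      have := Finset.le_sup' (fun u => τ w u) hx
      have := hτge w x
      linarith
    have hsum : τ_max ≤ ce S := by
      rw [hceS]
      calc τ_max ≤ (if h : (S.erase v).Nonempty then (S.erase v).sup' h (fun u => τ v u)
          else (N v).inf' (hN v) (fun u => τ v u)) := by rw [dif_pos (hne v hv)]; exact hterm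
        _ ≤ _ := Finset.single_le_sum hpos hv
    linarith
  · intro hclique
    have hterm : ∀ v ∈ S, (if h : (S.erase v).Nonempty then (S.erase v).sup' h (fun u => τ v u)
       else (N v).inf' (hN v) (fun u => τ v u)) = τ_min := by
      intro v hv
      rw [dif_pos (hne v hv)]
      apply le_antisymm
      · apply Finset.sup'_le
        intro u hu
        rw [Finset.mem_erase] at hu
        rw [hτ, if_pos (hclique v hv u hu.2 (fun h => hu.1 h.symm))]
      · obtain ⟨x, hx⟩ := hne v hv
        have h1 := Finset.le_sup' (fun u => τ v u) hx
        have hx' := Finset.mem_erase.mp hx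
        rw [hτ, if_pos (hclique v hv x hx'.2 (fun h => hx'.1 h.symm))] at h1
        exact h1
    rw [hceS, Finset.sum_congr rfl hterm, Finset.sum_const, nsmul_eq_mul, hB]
    apply mul_le_mul_of_nonneg_right _ hτmin.le
    exact_mod_cast Finset.card_le_univ S
end
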